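/- Let d, h be positive integers, W_f, W_i, W_m real h×(1+d+h) matrices, and fix s ∈ ℝ^h and c ∈ ℝ^h. Define Φ : ℝ^d → ℝ^h by Φ(x) = σ_s(W_f·(1,x,s)) ⊙ c + σ_s(W_i·(1,x,s)) ⊙ tanh(W_m·(1,x,s)), where σ_s(t) = 1/(1+e^{−t}) and tanh are applied entrywise and ⊙ is the entrywise product. Then for all x, x' ∈ ℝ^d, ‖Φ(x) − Φ(x')‖_∞ ≤ (‖W_f‖·‖c‖_∞ + ‖W_i‖ + ‖W_m‖)·‖x − x'‖_∞. -/

import Mathlib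

open scoped BigOperators

/-- The operator norm of a real matrix induced by the sup norms, i.e. the
maximum absolute row sum `max_i Σ_j |W i j|`. -/
noncomputable def supRowSum {m n : ℕ} (W : Matrix (Fin m) (Fin n) ℝ) : ℝ :=
  ⨆ i, ∑ j, |W i j|

/-- The logistic sigmoid `σ_s(t) = 1/(1+e^{-t})`. -/
noncomputable def sigmoid (t : ℝ) : ℝ := 1 / (1 + Real.exp (-t))

/-- The vector `(1, x, s) ∈ ℝ^{1+d+h}` obtained by concatenating 1, x and s. -/
def oneVec2 {d h : ℕ} (x : Fin d → ℝ) (s : Fin h → ℝ) : Fin (1 + d + h) → ℝ :=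
  Fin.append (Fin.append ![(1 : ℝ)] x) s

lemma sigmoid_hasDerivAt (t : ℝ) :
    HasDerivAt sigmoid (Real.exp (-t) / (1 + Real.exp (-t)) ^ 2) t := by
  have hne : (1 : ℝ) + Real.exp (-t) ≠ 0 := by positivity
  have h1 : HasDerivAt (fun t : ℝ => 1 + Real.exp (-t)) (-Real.exp (-t)) t := by
    simpa using (((Real.hasDerivAt_exp (-t)).comp t ((hasDerivAt_id t).neg)).const_add 1)
  have hs : sigmoid = fun y : ℝ => (1 + Real.exp (-y))⁻¹ := by
    funext y; simp [sigmoid]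
  rw [hs]
  have := h1.inv hne
  rw [neg_neg] at this
  exact this

lemma sigmoid_lip (a b : ℝ) : |sigmoid a - sigmoid b| ≤ |a - b| := by
  have key := (convex_univ : Convex ℝ (Set.univ : Set ℝ)).norm_image_sub_le_of_norm_hasDerivWithin_le
    (f := sigmoid) (f' := fun t => Real.exp (-t) / (1 + Real.exp (-t)) ^ 2) (C := 1)
    (fun t _ => (sigmoid_hasDerivAt t).hasDerivWithinAt) ?_ (Set.mem_univ b) (Set.mem_univ a)
  · simpa using key
  · intro t _
    have h1 : (0:ℝ) < Real.exp (-t) := Real.exp_pos _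
    rw [Real.norm_eq_abs, abs_of_nonneg (by positivity)]
    rw [div_le_one (by positivity)]
    nlinarith [Real.exp_pos (-t)]

lemma sigmoid_abs_le_one (t : ℝ) : |sigmoid t| ≤ 1 := by
  have h1 : (0:ℝ) < 1 + Real.exp (-t) := by positivity
  rw [sigmoid, abs_of_nonneg (by positivity), div_le_one h1]
  linarith [Real.exp_pos (-t)]

lemma tanh_hasDerivAt (t : ℝ) :
    HasDerivAt Real.tanh (1 / Real.cosh t ^ 2) t := by
  have hne : Real.cosh t ≠ 0 := (Real.cosh_pos t).ne'
  have := ((Real.hasDerivAt_sinh t).div (Real.hasDerivAt_cosh t) hne)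
  have heq : (Real.cosh t * Real.cosh t - Real.sinh t * Real.sinh t) / Real.cosh t ^ 2
      = 1 / Real.cosh t ^ 2 := by
    have := Real.cosh_sq_sub_sinh_sq t
    rw [show Real.cosh t * Real.cosh t - Real.sinh t * Real.sinh t
        = Real.cosh t ^ 2 - Real.sinh t ^ 2 by ring, this]
  rw [heq] at this
  have : HasDerivAt (fun t => Real.sinh t / Real.cosh t) (1 / Real.cosh t ^ 2) t := this
  convert this using 2 with u
  exact Real.tanh_eq_sinh_div_cosh u

lemma tanh_lip (a b : ℝ) : |Real.tanh a - Real.tanh b| ≤ |a - b| := by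
  have key := (convex_univ : Convex ℝ (Set.univ : Set ℝ)).norm_image_sub_le_of_norm_hasDerivWithin_le
    (f := Real.tanh) (f' := fun t => 1 / Real.cosh t ^ 2) (C := 1)
    (fun t _ => (tanh_hasDerivAt t).hasDerivWithinAt) ?_ (Set.mem_univ b) (Set.mem_univ a)
  · simpa using key
  · intro t _
    have h1 : (1:ℝ) ≤ Real.cosh t := Real.one_le_cosh t
    rw [Real.norm_eq_abs, abs_of_nonneg (by positivity), div_le_one (by positivity)]
    nlinarith

lemma tanh_abs_le_one (t : ℝ) : |Real.tanh t| ≤ 1 := by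
  have hc := Real.cosh_pos t
  have h2 : |Real.sinh t| ≤ Real.cosh t := by
    nlinarith [Real.cosh_sq_sub_sinh_sq t, abs_nonneg (Real.sinh t), sq_abs (Real.sinh t)]
  rw [Real.tanh_eq_sinh_div_cosh, abs_div, abs_of_pos hc, div_le_one hc]
  exact h2

theorem lstm_cell_update_lipschitz
    (d h : ℕ) (hd : 0 < d) (hh : 0 < h)
    (Wf Wi Wm : Matrix (Fin h) (Fin (1 + d + h)) ℝ)
    (s c : Fin h → ℝ)
    (Φ : (Fin d → ℝ) → Fin h → ℝ)
    (hΦ : Φ = fun x i =>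
      sigmoid (Wf.mulVec (oneVec2 x s) i) * c i
        + sigmoid (Wi.mulVec (oneVec2 x s) i) * Real.tanh (Wm.mulVec (oneVec2 x s) i))
    (x x' : Fin d → ℝ) :
    ‖Φ x - Φ x'‖ ≤ (supRowSum Wf * ‖c‖ + supRowSum Wi + supRowSum Wm) * ‖x - x'‖ := by
  haveI : Nonempty (Fin h) := ⟨⟨0, hh⟩⟩
  set u := oneVec2 x s
  set u' := oneVec2 x' s
  -- entrywise bound on u - u'
  have hu : ∀ j, |u j - u' j| ≤ ‖x - x'‖ := by
    intro j
    refine Fin.addCases (fun j => ?_) (fun j => ?_) j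
    · refine Fin.addCases (fun j => ?_) (fun j => ?_) j
      · simp [u, u', oneVec2, Fin.append_left]
      · have : u (Fin.castAdd h (Fin.natAdd 1 j)) = x j := by
          simp [u, oneVec2, Fin.append_left, Fin.append_right]
        have h2 : u' (Fin.castAdd h (Fin.natAdd 1 j)) = x' j := by
          simp [u', oneVec2, Fin.append_left, Fin.append_right]
        rw [this, h2]
        simpa using norm_le_pi_norm (x - x') j
    · simp [u, u', oneVec2, Fin.append_right]
  have hnorm : (0:ℝ) ≤ ‖x - x'‖ := norm_nonneg _
  -- mulVec row bound
  have hrow : ∀ (W : Matrix (Fin h) (Fin (1+d+h)) ℝ) (i : Fin h),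
      |W.mulVec u i - W.mulVec u' i| ≤ supRowSum W * ‖x - x'‖ := by
    intro W i
    have h1 : W.mulVec u i - W.mulVec u' i = ∑ j, W i j * (u j - u' j) := by
      simp [Matrix.mulVec, dotProduct, Finset.sum_sub_distrib, mul_sub]
    rw [h1]
    calc |∑ j, W i j * (u j - u' j)| ≤ ∑ j, |W i j * (u j - u' j)| :=
          Finset.abs_sum_le_sum_abs _ _
      _ ≤ ∑ j, |W i j| * ‖x - x'‖ := by
          refine Finset.sum_le_sum fun j _ => ?_
          rw [abs_mul]
          exact mul_le_mul_of_nonneg_left (hu j) (abs_nonneg _)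
      _ = (∑ j, |W i j|) * ‖x - x'‖ := by rw [Finset.sum_mul]
      _ ≤ supRowSum W * ‖x - x'‖ := by
          refine mul_le_mul_of_nonneg_right ?_ hnorm
          rw [supRowSum]
          exact le_ciSup (f := fun i => ∑ j, |W i j|)
            (Set.Finite.bddAbove (Set.finite_range _)) i
  have hsup_nonneg : ∀ (W : Matrix (Fin h) (Fin (1+d+h)) ℝ), (0:ℝ) ≤ supRowSum W := by
    intro W
    rw [supRowSum]
    refine le_trans (Finset.sum_nonneg fun j _ => abs_nonneg (W (Classical.arbitrary (Fin h)) j))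
      (le_ciSup (f := fun i => ∑ j, |W i j|)
        (Set.Finite.bddAbove (Set.finite_range _)) (Classical.arbitrary (Fin h)))
  have hWf := hsup_nonneg Wf
  have hWi := hsup_nonneg Wi
  have hWm := hsup_nonneg Wm
  have hcn : (0:ℝ) ≤ ‖c‖ := norm_nonneg c
  have hK : (0:ℝ) ≤ (supRowSum Wf * ‖c‖ + supRowSum Wi + supRowSum Wm) * ‖x - x'‖ := by
    positivity
  rw [pi_norm_le_iff_of_nonneg hK]
  intro i
  rw [hΦ]
  simp only [Pi.sub_apply]
  set af := Wf.mulVec u i; set af' := Wf.mulVec u' i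
  set ai := Wi.mulVec u i; set ai' := Wi.mulVec u' i
  set am := Wm.mulVec u i; set am' := Wm.mulVec u' i
  have key : sigmoid af * c i + sigmoid ai * Real.tanh am
      - (sigmoid af' * c i + sigmoid ai' * Real.tanh am')
      = (sigmoid af - sigmoid af') * c i
        + (sigmoid ai - sigmoid ai') * Real.tanh am
        + sigmoid ai' * (Real.tanh am - Real.tanh am') := by ring
  rw [Real.norm_eq_abs, key]
  have hci : |c i| ≤ ‖c‖ := by simpa using norm_le_pi_norm c i
  calc |(sigmoid af - sigmoid af') * c i
        + (sigmoid ai - sigmoid ai') * Real.tanh am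
        + sigmoid ai' * (Real.tanh am - Real.tanh am')|
      ≤ |(sigmoid af - sigmoid af') * c i|
        + |(sigmoid ai - sigmoid ai') * Real.tanh am|
        + |sigmoid ai' * (Real.tanh am - Real.tanh am')| := by
        exact (abs_add_le _ _).trans (by gcongr; exact abs_add_le _ _)
    _ ≤ (supRowSum Wf * ‖x - x'‖) * ‖c‖
        + (supRowSum Wi * ‖x - x'‖) * 1
        + 1 * (supRowSum Wm * ‖x - x'‖) := by
        gcongr
        · rw [abs_mul]
          exact mul_le_mul ((sigmoid_lip _ _).trans (hrow Wf i)) hci (abs_nonneg _)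
            (mul_nonneg hWf hnorm)
        · rw [abs_mul]
          exact mul_le_mul ((sigmoid_lip _ _).trans (hrow Wi i)) (tanh_abs_le_one _)
            (abs_nonneg _) (mul_nonneg hWi hnorm)
        · rw [abs_mul]
          exact mul_le_mul (sigmoid_abs_le_one _) ((tanh_lip _ _).trans (hrow Wm i))
            (abs_nonneg _) zero_le_one
    _ = (supRowSum Wf * ‖c‖ + supRowSum Wi + supRowSum Wm) * ‖x - x'‖ := by ring
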